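/- arXiv:2207.04421 — 2 statements merged into one kernel-verified Lean document; each statement's English description precedes it below -/
import Mathlib

section
/- Let a ∈ PB be a basis of the integer polymatroid P. An index i ∈ [n] is externally active with respect to a if and only if there exists a nonempty subset I ⊆ [n] such that i = min(I) and I is tight for a. -/
open Finset

variable {n : ℕ}

/-- The set of bases of the integer polymatroid with rank function `f` on ground set `Fin n`:
integer vectors `a` with `a i ≥ 0`, `∑_{i ∈ I} a i ≤ f I` for every `I`, and `∑ i, a i = f [n]`.
(The upper bound `a i ≤ f {i}` used for the ambient finite set is implied by the constraints.) -/
noncomputable def PB (n : ℕ) (f : Finset (Fin n) → ℕ) : Finset (Fin n → ℤ) :=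
  (Fintype.piFinset fun i : Fin n => Finset.Icc (0 : ℤ) (f {i})).filter fun a =>
    (∀ I : Finset (Fin n), ∑ j ∈ I, a j ≤ (f I : ℤ)) ∧ ∑ j, a j = (f Finset.univ : ℤ)

/-- A set `I` is tight for `a` if `∑_{i ∈ I} a i = f I`. -/
def Tight (f : Finset (Fin n) → ℕ) (a : Fin n → ℤ) (I : Finset (Fin n)) : Prop :=
  ∑ i ∈ I, a i = (f I : ℤ)

/-- `i` is internally active with respect to `a`: `a - e_i + e_j ∉ PB` for every `j < i`. -/
def IntAct (f : Finset (Fin n) → ℕ) (a : Fin n → ℤ) (i : Fin n) : Prop :=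
  ∀ j : Fin n, j < i → a - Pi.single i 1 + Pi.single j 1 ∉ PB n f

/-- `i` is externally active with respect to `a`: `a + e_i - e_j ∉ PB` for every `j < i`. -/
def ExtAct (f : Finset (Fin n) → ℕ) (a : Fin n → ℤ) (i : Fin n) : Prop :=
  ∀ j : Fin n, j < i → a + Pi.single i 1 - Pi.single j 1 ∉ PB n f

open scoped Classical in
/-- `Int(a)`: the set of internally active indices. -/
noncomputable def IntSet (f : Finset (Fin n) → ℕ) (a : Fin n → ℤ) : Finset (Fin n) :=
  Finset.univ.filter fun i => IntAct f a i

open scoped Classical in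
/-- `Ext(a)`: the set of externally active indices. -/
noncomputable def ExtSet (f : Finset (Fin n) → ℕ) (a : Fin n → ℤ) : Finset (Fin n) :=
  Finset.univ.filter fun i => ExtAct f a i

/-- `ι(a) = |Int(a)|`, the internal activity. -/
noncomputable def iota (f : Finset (Fin n) → ℕ) (a : Fin n → ℤ) : ℕ := (IntSet f a).card

/-- `ε(a) = |Ext(a)|`, the external activity. -/
noncomputable def eps (f : Finset (Fin n) → ℕ) (a : Fin n → ℤ) : ℕ := (ExtSet f a).card


lemma mem_PB_iff (f : Finset (Fin n) → ℕ) (a : Fin n → ℤ) :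
    a ∈ PB n f ↔ (∀ k, 0 ≤ a k) ∧ (∀ I : Finset (Fin n), ∑ j ∈ I, a j ≤ (f I : ℤ)) ∧
      ∑ j, a j = (f Finset.univ : ℤ) := by
  unfold PB
  simp only [mem_filter, Fintype.mem_piFinset, mem_Icc]
  constructor
  · rintro ⟨h1, h2, h3⟩; exact ⟨fun k => (h1 k).1, h2, h3⟩
  · rintro ⟨h1, h2, h3⟩
    refine ⟨fun k => ⟨h1 k, ?_⟩, h2, h3⟩
    simpa using h2 {k}

lemma tight_inter (f : Finset (Fin n) → ℕ)
    (hsub : ∀ I J : Finset (Fin n), f (I ∪ J) + f (I ∩ J) ≤ f I + f J)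
    (a : Fin n → ℤ) (hc : ∀ I : Finset (Fin n), ∑ j ∈ I, a j ≤ (f I : ℤ))
    {I J : Finset (Fin n)} (hI : Tight f a I) (hJ : Tight f a J) :
    Tight f a (I ∩ J) := by
  classical
  have h1 := hc (I ∪ J)
  have h2 := hc (I ∩ J)
  have h3 : ((f (I ∪ J) : ℤ) + (f (I ∩ J) : ℤ) ≤ (f I : ℤ) + (f J : ℤ)) := by
    exact_mod_cast hsub I J
  have h4 : ∑ j ∈ I ∪ J, a j + ∑ j ∈ I ∩ J, a j = ∑ j ∈ I, a j + ∑ j ∈ J, a j :=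
    Finset.sum_union_inter
  unfold Tight at *
  linarith

lemma sum_shift (a : Fin n → ℤ) (i j : Fin n) (I : Finset (Fin n)) :
    ∑ k ∈ I, (a + Pi.single i 1 - Pi.single j 1 : Fin n → ℤ) k =
      ∑ k ∈ I, a k + (if i ∈ I then 1 else 0) - (if j ∈ I then 1 else 0) := by
  classical
  simp only [Pi.sub_apply, Pi.add_apply, Finset.sum_sub_distrib, Finset.sum_add_distrib,
    Finset.sum_pi_single']

lemma exists_tight_of_notPB (f : Finset (Fin n) → ℕ) (a : Fin n → ℤ)
    (ha : a ∈ PB n f) (i j : Fin n) (hij : j ≠ i) (haj : 1 ≤ a j)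
    (hb : a + Pi.single i 1 - Pi.single j 1 ∉ PB n f) :
    ∃ I : Finset (Fin n), Tight f a I ∧ i ∈ I ∧ j ∉ I := by
  classical
  by_contra hcon
  push_neg at hcon
  rw [mem_PB_iff] at ha
  obtain ⟨hpos, hc, hsum⟩ := ha
  apply hb
  rw [mem_PB_iff]
  refine ⟨?_, ?_, ?_⟩
  · intro k
    by_cases hk : k = j
    · subst hk
      have : (0:ℤ) ≤ (Pi.single i 1 : Fin n → ℤ) k := by
        by_cases h : i = k <;> simp [Pi.single_apply, h]
      simp only [Pi.sub_apply, Pi.add_apply, Pi.single_eq_same]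
      have h2 : (Pi.single i 1 : Fin n → ℤ) k = 0 := by
        exact Pi.single_eq_of_ne hij 1
      omega
    · have h2 : (Pi.single j 1 : Fin n → ℤ) k = 0 := by
        simp [Pi.single_apply, Ne.symm hk]
      have : (0:ℤ) ≤ (Pi.single i 1 : Fin n → ℤ) k := by
        by_cases h : i = k <;> simp [Pi.single_apply, h]
      have := hpos k
      simp only [Pi.sub_apply, Pi.add_apply, h2]
      omega
  · intro I
    rw [sum_shift]
    by_cases hiI : i ∈ I
    · by_cases hjI : j ∈ I
      · simpa [hiI, hjI] using hc I
      · have hne : ∑ k ∈ I, a k ≠ (f I : ℤ) := fun h => hjI (hcon I h hiI)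
        have := hc I
        simp only [hiI, hjI, if_true, if_false]
        omega
    · have := hc I
      by_cases hjI : j ∈ I <;> simp [hiI, hjI] <;> omega
  · rw [sum_shift]
    simp [hsum]

lemma tight_inf (f : Finset (Fin n) → ℕ)
    (hsub : ∀ I J : Finset (Fin n), f (I ∪ J) + f (I ∩ J) ≤ f I + f J)
    (a : Fin n → ℤ) (hc : ∀ I : Finset (Fin n), ∑ j ∈ I, a j ≤ (f I : ℤ))
    (hu : Tight f a Finset.univ) (i : Fin n)
    (J : Finset (Fin n)) (S : Fin n → Finset (Fin n))
    (h : ∀ j ∈ J, Tight f a (S j) ∧ i ∈ S j) :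
    Tight f a (J.inf S) ∧ i ∈ J.inf S := by
  classical
  induction J using Finset.induction_on with
  | empty =>
      simp only [Finset.inf_empty, Finset.top_eq_univ]
      exact ⟨hu, Finset.mem_univ i⟩
  | @insert x s hx ih =>
      have hxS := h x (Finset.mem_insert_self x s)
      have ihs := ih (fun j hj => h j (Finset.mem_insert_of_mem hj))
      rw [Finset.inf_insert]
      rw [Finset.inf_eq_inter]
      exact ⟨tight_inter f hsub a hc hxS.1 ihs.1, Finset.mem_inter.mpr ⟨hxS.2, ihs.2⟩⟩

/-- `i` is externally active w.r.t. `a` iff there is a (nonempty) subset `I` with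
`i = min I` that is tight for `a`. -/
theorem externallyActive_iff
    (n : ℕ) (hn : 0 < n) (f : Finset (Fin n) → ℕ)
    (hf0 : f ∅ = 0)
    (hmono : ∀ I J : Finset (Fin n), I ⊆ J → f I ≤ f J)
    (hsub : ∀ I J : Finset (Fin n), f (I ∪ J) + f (I ∩ J) ≤ f I + f J)
    (a : Fin n → ℤ) (ha : a ∈ PB n f) (i : Fin n) :
    ExtAct f a i ↔
      ∃ I : Finset (Fin n), i ∈ I ∧ (∀ j ∈ I, i ≤ j) ∧ Tight f a I := by
  classical
  obtain ⟨hpos, hc, hsum⟩ := (mem_PB_iff f a).mp ha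
  have hu : Tight f a Finset.univ := hsum
  constructor
  · intro hext
    have key : ∀ j : Fin n, ∃ S : Finset (Fin n),
        (j < i ∧ a j ≠ 0) → (Tight f a S ∧ i ∈ S ∧ j ∉ S) := by
      intro j
      by_cases hj : j < i ∧ a j ≠ 0
      · obtain ⟨hjlt, hja⟩ := hj
        have haj : 1 ≤ a j := by have := hpos j; omega
        obtain ⟨S, hS⟩ := exists_tight_of_notPB f a ha i j (ne_of_lt hjlt) haj (hext j hjlt)
        exact ⟨S, fun _ => hS⟩
      · exact ⟨∅, fun h => absurd h hj⟩
    choose S hS using key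
    set J : Finset (Fin n) := Finset.univ.filter (fun j => j < i ∧ a j ≠ 0) with hJ
    have hJS : ∀ j ∈ J, Tight f a (S j) ∧ i ∈ S j := by
      intro j hj
      rw [hJ, Finset.mem_filter] at hj
      exact ⟨(hS j hj.2).1, (hS j hj.2).2.1⟩
    obtain ⟨hT, hiT⟩ := tight_inf f hsub a hc hu i J S hJS
    set T := J.inf S with hTdef
    set I := T.filter (fun j => i ≤ j) with hI
    have hiI : i ∈ I := Finset.mem_filter.mpr ⟨hiT, le_refl i⟩
    refine ⟨I, hiI, fun j hj => (Finset.mem_filter.mp hj).2, ?_⟩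
    -- every removed element has a j = 0
    have hzero : ∀ j ∈ T.filter (fun j => ¬ i ≤ j), a j = 0 := by
      intro j hj
      rw [Finset.mem_filter] at hj
      obtain ⟨hjT, hjlt⟩ := hj
      rw [not_le] at hjlt
      by_contra hja
      have hjJ : j ∈ J := by rw [hJ, Finset.mem_filter]; exact ⟨Finset.mem_univ j, hjlt, hja⟩
      have : T ⊆ S j := Finset.inf_le hjJ
      exact (hS j ⟨hjlt, hja⟩).2.2 (this hjT)
    have hsumeq : ∑ j ∈ I, a j = ∑ j ∈ T, a j := by
      rw [hI]
      rw [← Finset.sum_filter_add_sum_filter_not T (fun j => i ≤ j) a]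
      rw [Finset.sum_congr rfl hzero]
      simp
    have hIT : I ⊆ T := Finset.filter_subset _ _
    have hmIT : (f I : ℤ) ≤ (f T : ℤ) := by exact_mod_cast hmono I T hIT
    have h1 := hc I
    unfold Tight at hT ⊢
    omega
  · rintro ⟨I, hiI, hmin, htI⟩ j hj hb
    rw [mem_PB_iff] at hb
    have hcI := hb.2.1 I
    rw [sum_shift] at hcI
    have hjI : j ∉ I := fun h => absurd (hmin j h) (not_le.mpr hj)
    rw [htI] at hcI
    simp only [hiI, hjI, if_true, if_false] at hcI
    omega
end

section
/- The univariate polynomials J_P(x, 1) = Σ_{a ∈ PB} x^{ι(a)} and J_P(1, y) = Σ_{a ∈ PB} y^{ε(a)} are interpolating. -/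
open Finset

variable {n : ℕ}

/-- A univariate polynomial is interpolating if its set of exponents with nonzero
coefficient is a set of consecutive integers. -/
def Interpolating {R : Type*} [Semiring R] (p : Polynomial R) : Prop :=
  ∀ k l m : ℕ, k ≤ l → l ≤ m → p.coeff k ≠ 0 → p.coeff m ≠ 0 → p.coeff l ≠ 0

section Helpers1
variable {n : ℕ}
lemma memPB {f : Finset (Fin n) → ℕ} {a : Fin n → ℤ} :
    a ∈ PB n f ↔ (∀ i, 0 ≤ a i) ∧ (∀ I : Finset (Fin n), ∑ j ∈ I, a j ≤ (f I : ℤ)) ∧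
      ∑ j, a j = (f Finset.univ : ℤ) := by
  simp only [PB, mem_filter, Fintype.mem_piFinset, mem_Icc]
  constructor
  · rintro ⟨h1, h2, h3⟩
    exact ⟨fun i => (h1 i).1, h2, h3⟩
  · rintro ⟨h1, h2, h3⟩
    refine ⟨fun i => ⟨h1 i, ?_⟩, h2, h3⟩
    simpa using h2 {i}

/-- value of a transfer vector -/
lemma transfer_apply (a : Fin n → ℤ) (i j k : Fin n) :
    ((a - Pi.single i 1 + Pi.single j 1 : Fin n → ℤ)) k
      = a k - (if k = i then 1 else 0) + (if k = j then 1 else 0) := by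
  simp [Pi.single_apply]

lemma transfer_sum (a : Fin n → ℤ) (i j : Fin n) (I : Finset (Fin n)) :
    ∑ k ∈ I, ((a - Pi.single i 1 + Pi.single j 1 : Fin n → ℤ)) k
      = ∑ k ∈ I, a k - (if i ∈ I then 1 else 0) + (if j ∈ I then 1 else 0) := by
  simp only [Pi.add_apply, Pi.sub_apply, Finset.sum_add_distrib, Finset.sum_sub_distrib,
    Finset.sum_pi_single']

/-- union of two tight sets is tight -/
lemma tight_union {f : Finset (Fin n) → ℕ}
    (hsub : ∀ I J : Finset (Fin n), f (I ∪ J) + f (I ∩ J) ≤ f I + f J)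
    {a : Fin n → ℤ} (ha : ∀ I : Finset (Fin n), ∑ j ∈ I, a j ≤ (f I : ℤ))
    {A B : Finset (Fin n)} (hA : ∑ j ∈ A, a j = (f A : ℤ)) (hB : ∑ j ∈ B, a j = (f B : ℤ)) :
    ∑ j ∈ A ∪ B, a j = (f (A ∪ B) : ℤ) := by
  have h1 : ((f (A ∪ B) : ℤ)) + f (A ∩ B) ≤ (f A : ℤ) + f B := by exact_mod_cast hsub A B
  have h2 := ha (A ∩ B)
  have h3 := ha (A ∪ B)
  have h4 : ∑ x ∈ A ∪ B, a x + ∑ x ∈ A ∩ B, a x = ∑ x ∈ A, a x + ∑ x ∈ B, a x :=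
    Finset.sum_union_inter
  linarith

/-- Exchange lemma: if `a i ≥ 1` and the complement of `i` is not tight, then some
transfer from `i` into the complement stays in `PB`. -/
lemma exists_transfer {f : Finset (Fin n) → ℕ}
    (hf0 : f ∅ = 0)
    (hsub : ∀ I J : Finset (Fin n), f (I ∪ J) + f (I ∩ J) ≤ f I + f J)
    {a : Fin n → ℤ} (ha : a ∈ PB n f) (i : Fin n) (hi : 1 ≤ a i)
    (hnt : ∑ j ∈ Finset.univ.erase i, a j < (f (Finset.univ.erase i) : ℤ)) :
    ∃ j ∈ Finset.univ.erase i, a - Pi.single i 1 + Pi.single j 1 ∈ PB n f := by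
  classical
  obtain ⟨hpos, hcon, htot⟩ := memPB.mp ha
  set p : Finset (Fin n) → Prop := fun I => i ∉ I ∧ ∑ j ∈ I, a j = (f I : ℤ) with hp
  set S : Finset (Finset (Fin n)) := Finset.univ.filter p with hS
  set U : Finset (Fin n) := S.sup id with hU
  have hpU : p U := by
    refine Finset.sup_induction ⟨notMem_empty i, by simp [hf0]⟩ ?_ ?_
    · rintro A ⟨hA1, hA2⟩ B ⟨hB1, hB2⟩
      exact ⟨by simp [hA1, hB1], tight_union hsub hcon hA2 hB2⟩
    · intro I hI
      simpa [hS, hp] using (Finset.mem_filter.mp hI).2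
  have hUsub : U ⊆ Finset.univ.erase i := fun x hx => by
    simp only [mem_erase, mem_univ, and_true]
    rintro rfl; exact hpU.1 hx
  have hUne : U ≠ Finset.univ.erase i := by
    intro h
    rw [h] at hpU
    exact absurd hpU.2 (ne_of_lt hnt)
  obtain ⟨j, hjE, hjU⟩ := Finset.exists_of_ssubset (lt_of_le_of_ne hUsub hUne)
  have hji : j ≠ i := (Finset.mem_erase.mp hjE).1
  refine ⟨j, hjE, memPB.mpr ⟨?_, ?_, ?_⟩⟩
  · intro k
    rw [transfer_apply]
    have h1 := hpos k
    rcases eq_or_ne k i with rfl | hki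
    · rw [if_pos rfl, if_neg (fun h => hji h.symm)]; omega
    · rw [if_neg hki]; split <;> omega
  · intro I
    rw [transfer_sum]
    by_cases hjI : j ∈ I
    · by_cases hiI : i ∈ I
      · simpa [hiI, hjI] using hcon I
      · -- I is not tight
        have hnotT : ∑ k ∈ I, a k ≠ (f I : ℤ) := by
          intro htight
          have hIS : I ∈ S := by
            simp only [hS, Finset.mem_filter, Finset.mem_univ, true_and, hp]
            exact ⟨hiI, htight⟩
          have : I ⊆ U := by
            simpa [hU] using Finset.le_sup (f := id) hIS
          exact hjU (this hjI)
        have := hcon I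
        simp only [hjI, hiI, if_true, if_false]
        omega
    · have := hcon I
      split <;> simp <;> omega
  · rw [transfer_sum]
    simp [htot]

open scoped Classical in
lemma iota_le {f : Finset (Fin n) → ℕ} (a : Fin n → ℤ) : iota f a ≤ n := by
  have := Finset.card_filter_le Finset.univ (fun i => IntAct f a i)
  simpa [iota, IntSet] using this

end Helpers1
section SliceSection
variable {m : ℕ}
/-- lift a subset of `Fin m` to `Fin (m+1)` -/
def liftF (I : Finset (Fin m)) : Finset (Fin (m+1)) := I.map Fin.castSuccEmb

lemma mem_liftF {I : Finset (Fin m)} {j : Fin (m+1)} :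
    j ∈ liftF I ↔ ∃ i ∈ I, Fin.castSucc i = j := by
  simp only [liftF, Finset.mem_map, Fin.castSuccEmb]
  rfl

lemma last_not_mem_liftF (I : Finset (Fin m)) : Fin.last m ∉ liftF I := by
  rw [mem_liftF]
  rintro ⟨i, -, hi⟩
  exact absurd hi (Fin.castSucc_lt_last i).ne

lemma sum_liftF (a : Fin (m+1) → ℤ) (I : Finset (Fin m)) :
    ∑ j ∈ liftF I, a j = ∑ i ∈ I, a (Fin.castSucc i) := by
  rw [liftF, Finset.sum_map]
  rfl

lemma insert_last_liftF_univ :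
    insert (Fin.last m) (liftF (Finset.univ : Finset (Fin m))) = Finset.univ := by
  apply Finset.eq_univ_of_forall
  intro j
  rcases eq_or_ne j (Fin.last m) with rfl | hj
  · exact Finset.mem_insert_self _ _
  · obtain ⟨i, rfl⟩ := Fin.exists_castSucc_eq.mpr hj
    exact Finset.mem_insert_of_mem (mem_liftF.mpr ⟨i, Finset.mem_univ i, rfl⟩)

lemma liftF_union (A B : Finset (Fin m)) : liftF (A ∪ B) = liftF A ∪ liftF B :=
  Finset.map_union _ _

lemma liftF_inter (A B : Finset (Fin m)) : liftF (A ∩ B) = liftF A ∩ liftF B := by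
  apply Finset.ext
  intro j
  simp only [mem_liftF, Finset.mem_inter]
  constructor
  · rintro ⟨i, hi, rfl⟩
    exact ⟨⟨i, hi.1, rfl⟩, ⟨i, hi.2, rfl⟩⟩
  · rintro ⟨⟨i, hi, rfl⟩, ⟨i', hi', he⟩⟩
    have : i' = i := Fin.castSucc_injective m he
    subst this
    exact ⟨i', ⟨hi, hi'⟩, rfl⟩

lemma exists_liftF {I : Finset (Fin (m+1))} (hL : Fin.last m ∉ I) :
    ∃ I' : Finset (Fin m), I = liftF I' := by
  classical
  refine ⟨I.preimage Fin.castSucc ((Fin.castSucc_injective m).injOn), ?_⟩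
  apply Finset.ext
  intro j
  simp only [mem_liftF, Finset.mem_preimage]
  constructor
  · intro hj
    have hjL : j ≠ Fin.last m := fun h => hL (h ▸ hj)
    obtain ⟨i, rfl⟩ := Fin.exists_castSucc_eq.mpr hjL
    exact ⟨i, hj, rfl⟩
  · rintro ⟨i, hi, rfl⟩
    exact hi

/-- the slice rank function `f_t(I) = min (f I) (f (I ∪ {last}) - t)` -/
def sliceF (m : ℕ) (f : Finset (Fin (m+1)) → ℕ) (t : ℕ) (I : Finset (Fin m)) : ℕ :=
  min (f (liftF I)) (f (insert (Fin.last m) (liftF I)) - t)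

section Slice

variable {f : Finset (Fin (m+1)) → ℕ} {t : ℕ}

lemma sliceF_cast
    (hmono : ∀ I J : Finset (Fin (m+1)), I ⊆ J → f I ≤ f J)
    (ht : t ≤ f {Fin.last m}) (I : Finset (Fin m)) :
    (sliceF m f t I : ℤ)
      = min (f (liftF I) : ℤ) ((f (insert (Fin.last m) (liftF I)) : ℤ) - t) := by
  have h : t ≤ f (insert (Fin.last m) (liftF I)) :=
    le_trans ht (hmono _ _ (by simp))
  rw [sliceF, Nat.cast_min, Nat.cast_sub h]

lemma sliceF_empty (hf0 : f ∅ = 0) : sliceF m f t ∅ = 0 := by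
  have : liftF (∅ : Finset (Fin m)) = ∅ := rfl
  simp [sliceF, this, hf0]

lemma sliceF_mono (hmono : ∀ I J : Finset (Fin (m+1)), I ⊆ J → f I ≤ f J)
    (I J : Finset (Fin m)) (hIJ : I ⊆ J) : sliceF m f t I ≤ sliceF m f t J := by
  have h1 : liftF I ⊆ liftF J := Finset.map_subset_map.mpr hIJ
  exact min_le_min (hmono _ _ h1)
    (Nat.sub_le_sub_right (hmono _ _ (Finset.insert_subset_insert _ h1)) t)

lemma sliceF_submod
    (hmono : ∀ I J : Finset (Fin (m+1)), I ⊆ J → f I ≤ f J)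
    (hsub : ∀ I J : Finset (Fin (m+1)), f (I ∪ J) + f (I ∩ J) ≤ f I + f J)
    (ht : t ≤ f {Fin.last m}) (A B : Finset (Fin m)) :
    sliceF m f t (A ∪ B) + sliceF m f t (A ∩ B) ≤ sliceF m f t A + sliceF m f t B := by
  classical
  have hcast := sliceF_cast (f := f) (t := t) hmono ht
  set L := Fin.last m
  have key : (sliceF m f t (A ∪ B) : ℤ) + sliceF m f t (A ∩ B)
      ≤ (sliceF m f t A : ℤ) + sliceF m f t B := by
    rw [hcast, hcast, hcast, hcast, liftF_union, liftF_inter]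
    set X := liftF A
    set Y := liftF B
    have hLX : L ∉ X := last_not_mem_liftF A
    have hLY : L ∉ Y := last_not_mem_liftF B
    have e1 : insert L X ∪ insert L Y = insert L (X ∪ Y) := by
      simp [Finset.insert_union, Finset.union_insert]
    have e2 : insert L X ∩ insert L Y = insert L (X ∩ Y) :=
      (Finset.insert_inter_distrib X Y L).symm
    have e3 : X ∪ insert L Y = insert L (X ∪ Y) := Finset.union_insert _ _ _
    have e4 : X ∩ insert L Y = X ∩ Y := Finset.inter_insert_of_notMem hLX
    have e5 : insert L X ∪ Y = insert L (X ∪ Y) := Finset.insert_union _ _ _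
    have e6 : insert L X ∩ Y = X ∩ Y := Finset.insert_inter_of_notMem hLY
    rcases min_cases (f X : ℤ) ((f (insert L X) : ℤ) - t) with ⟨hA, -⟩ | ⟨hA, -⟩ <;>
      rcases min_cases (f Y : ℤ) ((f (insert L Y) : ℤ) - t) with ⟨hB, -⟩ | ⟨hB, -⟩
    · -- both plain
      have h := hsub X Y
      have h1 : min (f (X ∪ Y) : ℤ) ((f (insert L (X ∪ Y)) : ℤ) - t) ≤ f (X ∪ Y) :=
        min_le_left _ _
      have h2 : min (f (X ∩ Y) : ℤ) ((f (insert L (X ∩ Y)) : ℤ) - t) ≤ f (X ∩ Y) :=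
        min_le_left _ _
      push_cast at h
      linarith
    · -- A plain, B inserted
      have h := hsub X (insert L Y)
      rw [e3, e4] at h
      have h1 : min (f (X ∪ Y) : ℤ) ((f (insert L (X ∪ Y)) : ℤ) - t)
          ≤ (f (insert L (X ∪ Y)) : ℤ) - t := min_le_right _ _
      have h2 : min (f (X ∩ Y) : ℤ) ((f (insert L (X ∩ Y)) : ℤ) - t) ≤ f (X ∩ Y) :=
        min_le_left _ _
      push_cast at h
      linarith
    · -- A inserted, B plain
      have h := hsub (insert L X) Y
      rw [e5, e6] at h
      have h1 : min (f (X ∪ Y) : ℤ) ((f (insert L (X ∪ Y)) : ℤ) - t)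
          ≤ (f (insert L (X ∪ Y)) : ℤ) - t := min_le_right _ _
      have h2 : min (f (X ∩ Y) : ℤ) ((f (insert L (X ∩ Y)) : ℤ) - t) ≤ f (X ∩ Y) :=
        min_le_left _ _
      push_cast at h
      linarith
    · -- both inserted
      have h := hsub (insert L X) (insert L Y)
      rw [e1, e2] at h
      have h1 : min (f (X ∪ Y) : ℤ) ((f (insert L (X ∪ Y)) : ℤ) - t)
          ≤ (f (insert L (X ∪ Y)) : ℤ) - t := min_le_right _ _
      have h2 : min (f (X ∩ Y) : ℤ) ((f (insert L (X ∩ Y)) : ℤ) - t)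
          ≤ (f (insert L (X ∩ Y)) : ℤ) - t := min_le_right _ _
      push_cast at h
      linarith
  exact_mod_cast key

-- S1: restriction of a basis lies in the slice
lemma memPB_slice (hmono : ∀ I J : Finset (Fin (m+1)), I ⊆ J → f I ≤ f J)
    {a : Fin (m+1) → ℤ} (ha : a ∈ PB (m+1) f) (hat : a (Fin.last m) = (t : ℤ)) :
    (fun i => a (Fin.castSucc i)) ∈ PB m (sliceF m f t) := by
  classical
  obtain ⟨hpos, hcon, htot⟩ := memPB.mp ha
  have ht : t ≤ f {Fin.last m} := by
    have := hcon {Fin.last m}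
    rw [Finset.sum_singleton, hat] at this
    exact_mod_cast this
  have hsum : ∀ I : Finset (Fin m),
      ∑ i ∈ I, a (Fin.castSucc i) = ∑ j ∈ liftF I, a j := fun I => (sum_liftF a I).symm
  have hins : ∀ I : Finset (Fin m),
      ∑ j ∈ insert (Fin.last m) (liftF I), a j = (t : ℤ) + ∑ i ∈ I, a (Fin.castSucc i) := by
    intro I
    rw [Finset.sum_insert (last_not_mem_liftF I), hat, hsum]
  refine memPB.mpr ⟨fun i => hpos _, ?_, ?_⟩
  · intro I
    rw [sliceF_cast hmono ht, le_min_iff]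
    constructor
    · rw [hsum]; exact hcon (liftF I)
    · have := hcon (insert (Fin.last m) (liftF I))
      rw [hins] at this
      linarith
  · have htotc : ∑ i : Fin m, a (Fin.castSucc i) = (f Finset.univ : ℤ) - t := by
      have := Fin.sum_univ_castSucc a
      rw [htot] at this  -- careful
      rw [hat] at this
      linarith [this.symm]
    rw [htotc, sliceF_cast hmono ht, min_eq_right]
    · rw [insert_last_liftF_univ]
    · rw [insert_last_liftF_univ]
      have := hcon (liftF Finset.univ)
      rw [sum_liftF, htotc] at this
      linarith

-- S2: extending a slice basis gives a basis
lemma snoc_memPB (hmono : ∀ I J : Finset (Fin (m+1)), I ⊆ J → f I ≤ f J)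
    {a' : Fin m → ℤ} (ha' : a' ∈ PB m (sliceF m f t))
    (ht : t ≤ f {Fin.last m})
    (htmin : (f Finset.univ : ℤ) - (f (liftF (Finset.univ : Finset (Fin m))) : ℤ) ≤ t) :
    Fin.snoc a' (t : ℤ) ∈ PB (m+1) f := by
  classical
  obtain ⟨hpos, hcon, htot⟩ := memPB.mp ha'
  set b : Fin (m+1) → ℤ := Fin.snoc a' (t : ℤ) with hb
  have hbL : b (Fin.last m) = (t : ℤ) := Fin.snoc_last _ _
  have hbc : ∀ i : Fin m, b (Fin.castSucc i) = a' i := fun i => Fin.snoc_castSucc _ _ _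
  have hsum : ∀ I : Finset (Fin m), ∑ j ∈ liftF I, b j = ∑ i ∈ I, a' i := by
    intro I
    rw [sum_liftF]
    exact Finset.sum_congr rfl fun i _ => hbc i
  have hsliceU : (sliceF m f t (Finset.univ : Finset (Fin m)) : ℤ)
      = (f (Finset.univ : Finset (Fin (m+1))) : ℤ) - t := by
    rw [sliceF_cast hmono ht, insert_last_liftF_univ, min_eq_right]
    linarith
  refine memPB.mpr ⟨?_, ?_, ?_⟩
  · intro i
    induction i using Fin.lastCases with
    | last => rw [hbL]; positivity
    | cast i => rw [hbc]; exact hpos i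
  · intro I
    by_cases hL : Fin.last m ∈ I
    · obtain ⟨I', hI'⟩ := exists_liftF (I := I.erase (Fin.last m)) (by simp)
      have hIe : I = insert (Fin.last m) (liftF I') := by
        rw [← hI', Finset.insert_erase hL]
      rw [hIe, Finset.sum_insert (last_not_mem_liftF I'), hbL, hsum]
      have h1 := hcon I'
      rw [sliceF_cast hmono ht, le_min_iff] at h1
      linarith [h1.2]
    · obtain ⟨I', rfl⟩ := exists_liftF hL
      rw [hsum]
      have h1 := hcon I'
      rw [sliceF_cast hmono ht, le_min_iff] at h1
      exact h1.1
  · rw [Fin.sum_univ_castSucc]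
    simp only [hbc, hbL]
    rw [Finset.sum_congr rfl fun i _ => rfl]
    have : ∑ i : Fin m, a' i = (sliceF m f t Finset.univ : ℤ) := htot
    rw [this, hsliceU]
    ring
end Slice

-- pointwise identities
lemma transfer_castSucc (a : Fin (m+1) → ℤ) (i j : Fin m) :
    (fun k => (a - Pi.single (Fin.castSucc i) 1 + Pi.single (Fin.castSucc j) 1 : Fin (m+1) → ℤ) (Fin.castSucc k))
      = (fun k => a (Fin.castSucc k)) - Pi.single i 1 + Pi.single j 1 := by
  funext k
  simp only [Pi.add_apply, Pi.sub_apply, Pi.single_apply,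
    Fin.castSucc_inj]

lemma transfer_last (a : Fin (m+1) → ℤ) (i j : Fin m) :
    (a - Pi.single (Fin.castSucc i) 1 + Pi.single (Fin.castSucc j) 1 : Fin (m+1) → ℤ) (Fin.last m)
      = a (Fin.last m) := by
  simp only [Pi.add_apply, Pi.sub_apply, Pi.single_apply]
  rw [if_neg (Fin.castSucc_lt_last i).ne', if_neg (Fin.castSucc_lt_last j).ne']
  ring

lemma snoc_transfer (a' : Fin m → ℤ) (t : ℤ) (i j : Fin m) :
    Fin.snoc (a' - Pi.single i 1 + Pi.single j 1) t
      = (Fin.snoc a' t : Fin (m+1) → ℤ) - Pi.single (Fin.castSucc i) 1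
        + Pi.single (Fin.castSucc j) 1 := by
  funext k
  induction k using Fin.lastCases with
  | last =>
    simp only [Fin.snoc_last, Pi.add_apply, Pi.sub_apply, Pi.single_apply]
    rw [if_neg (Fin.castSucc_lt_last i).ne', if_neg (Fin.castSucc_lt_last j).ne']
    ring
  | cast k =>
    simp only [Fin.snoc_castSucc, Pi.add_apply, Pi.sub_apply, Pi.single_apply,
      Fin.castSucc_inj]

-- activity transfer for indices below the last
lemma intAct_castSucc {f : Finset (Fin (m+1)) → ℕ} {t : ℕ}
    (hmono : ∀ I J : Finset (Fin (m+1)), I ⊆ J → f I ≤ f J)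
    {a : Fin (m+1) → ℤ} (ha : a ∈ PB (m+1) f) (hat : a (Fin.last m) = (t : ℤ))
    (ht : t ≤ f {Fin.last m})
    (htmin : (f Finset.univ : ℤ) - (f (liftF (Finset.univ : Finset (Fin m))) : ℤ) ≤ t)
    (i : Fin m) :
    IntAct f a (Fin.castSucc i) ↔ IntAct (sliceF m f t) (fun k => a (Fin.castSucc k)) i := by
  constructor
  · intro h j hj hmem
    have hsnoc := snoc_memPB hmono hmem ht htmin
    rw [snoc_transfer] at hsnoc
    have hsa : (Fin.snoc (fun k => a (Fin.castSucc k)) (t : ℤ) : Fin (m+1) → ℤ) = a := by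
      funext k
      induction k using Fin.lastCases with
      | last => rw [Fin.snoc_last, hat]
      | cast k => rw [Fin.snoc_castSucc]
    rw [hsa] at hsnoc
    exact h (Fin.castSucc j) (by exact_mod_cast Fin.castSucc_lt_castSucc_iff.mpr hj) hsnoc
  · intro h j hj hmem
    have hjL : j ≠ Fin.last m := ne_of_lt (lt_of_lt_of_le hj (Fin.le_last _))
    obtain ⟨j', rfl⟩ := Fin.exists_castSucc_eq.mpr hjL
    have hj' : j' < i := Fin.castSucc_lt_castSucc_iff.mp hj
    have hlast : (a - Pi.single (Fin.castSucc i) 1 + Pi.single (Fin.castSucc j') 1 : Fin (m+1) → ℤ)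
        (Fin.last m) = (t : ℤ) := by rw [transfer_last, hat]
    have := memPB_slice hmono hmem hlast
    rw [transfer_castSucc] at this
    exact h j' hj' this

lemma erase_last_univ :
    (Finset.univ : Finset (Fin (m+1))).erase (Fin.last m)
      = liftF (Finset.univ : Finset (Fin m)) := by
  rw [← insert_last_liftF_univ, Finset.erase_insert (last_not_mem_liftF _)]

/-- criterion for the last index to be internally active -/
lemma intAct_last {f : Finset (Fin (m+1)) → ℕ}
    (hf0 : f ∅ = 0)
    (hsub : ∀ I J : Finset (Fin (m+1)), f (I ∪ J) + f (I ∩ J) ≤ f I + f J)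
    {a : Fin (m+1) → ℤ} (ha : a ∈ PB (m+1) f) :
    IntAct f a (Fin.last m) ↔
      (a (Fin.last m) = 0 ∨
        ∑ j ∈ liftF (Finset.univ : Finset (Fin m)), a j
          = (f (liftF (Finset.univ : Finset (Fin m))) : ℤ)) := by
  obtain ⟨hpos, hcon, htot⟩ := memPB.mp ha
  constructor
  · intro h
    by_contra hc
    push_neg at hc
    obtain ⟨h0, hnt⟩ := hc
    have h1 : 1 ≤ a (Fin.last m) := by
      have := hpos (Fin.last m); omega
    have hlt : ∑ j ∈ Finset.univ.erase (Fin.last m), a j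
        < (f (Finset.univ.erase (Fin.last m)) : ℤ) := by
      rw [erase_last_univ]
      exact lt_of_le_of_ne (hcon _) hnt
    obtain ⟨j, hjmem, hjPB⟩ := exists_transfer hf0 hsub ha (Fin.last m) h1 hlt
    have hjL : j ≠ Fin.last m := (Finset.mem_erase.mp hjmem).1
    have : j < Fin.last m := lt_of_le_of_ne (Fin.le_last j) hjL
    exact h j this hjPB
  · intro h j hj hmem
    obtain ⟨hpos', hcon', -⟩ := memPB.mp hmem
    have hjL : j ≠ Fin.last m := ne_of_lt hj
    rcases h with h0 | htight
    · have := hpos' (Fin.last m)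
      have : (0:ℤ) ≤ a (Fin.last m) - 1 + 0 := by
        have h2 := hpos' (Fin.last m)
        simpa [Pi.single_apply, hjL.symm] using h2
      omega
    · have hjmem : j ∈ liftF (Finset.univ : Finset (Fin m)) := by
        obtain ⟨j', rfl⟩ := Fin.exists_castSucc_eq.mpr hjL
        exact mem_liftF.mpr ⟨j', Finset.mem_univ _, rfl⟩
      have := hcon' (liftF (Finset.univ : Finset (Fin m)))
      rw [transfer_sum, htight] at this
      rw [if_neg (last_not_mem_liftF _), if_pos hjmem] at this
      omega

open scoped Classical in
lemma iota_decomp {f : Finset (Fin (m+1)) → ℕ} {t : ℕ}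
    (hmono : ∀ I J : Finset (Fin (m+1)), I ⊆ J → f I ≤ f J)
    {a : Fin (m+1) → ℤ} (ha : a ∈ PB (m+1) f) (hat : a (Fin.last m) = (t : ℤ))
    (ht : t ≤ f {Fin.last m})
    (htmin : (f Finset.univ : ℤ) - (f (liftF (Finset.univ : Finset (Fin m))) : ℤ) ≤ t) :
    iota f a = iota (sliceF m f t) (fun k => a (Fin.castSucc k))
      + (if IntAct f a (Fin.last m) then 1 else 0) := by
  simp only [iota, IntSet, Finset.card_filter]
  rw [Fin.sum_univ_castSucc]
  congr 1
  apply Finset.sum_congr rfl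
  intro i _
  exact if_congr (intAct_castSucc hmono ha hat ht htmin i) rfl rfl

theorem iota_interval : ∀ (m : ℕ) (f : Finset (Fin (m+1)) → ℕ),
    f ∅ = 0 → (∀ I J : Finset (Fin (m+1)), I ⊆ J → f I ≤ f J) →
    (∀ I J : Finset (Fin (m+1)), f (I ∪ J) + f (I ∩ J) ≤ f I + f J) →
    (∃ a ∈ PB (m+1) f, iota f a = m+1) ∧
    (∀ a ∈ PB (m+1) f, ∀ l, iota f a ≤ l → l ≤ m+1 → ∃ b ∈ PB (m+1) f, iota f b = l) := by
  intro m
  induction m with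
  | zero =>
    intro f hf0 hmono hsub
    have hiota : ∀ a : Fin 1 → ℤ, iota f a = 1 := by
      intro a
      have hact : ∀ i : Fin 1, IntAct f a i := by
        intro i j hj
        exfalso
        have h1 := i.isLt
        have h2 := j.isLt
        rw [Fin.lt_def] at hj
        omega
      classical
      rw [iota, IntSet, Finset.filter_true_of_mem (fun i _ => hact i)]
      simp
    have hmem : (fun _ : Fin 1 => (f Finset.univ : ℤ)) ∈ PB 1 f := by
      refine memPB.mpr ⟨fun i => by positivity, ?_, by simp⟩
      intro I
      rcases Finset.eq_empty_or_nonempty I with rfl | hne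
      · simp [hf0]
      · have : I = Finset.univ := by
          apply Finset.eq_univ_of_forall
          intro x
          obtain ⟨y, hy⟩ := hne
          have hxy : x = y := Fin.ext (by have := x.isLt; have := y.isLt; omega)
          rwa [hxy]
        subst this
        simp
    refine ⟨⟨_, hmem, hiota _⟩, ?_⟩
    intro a ha l hl1 hl2
    rw [hiota] at hl1
    have : l = 1 := le_antisymm hl2 hl1
    exact ⟨a, ha, by rw [hiota, this]⟩
  | succ m IH =>
    intro f hf0 hmono hsub
    set L := Fin.last (m+1) with hL
    set P := liftF (Finset.univ : Finset (Fin (m+1))) with hP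
    have hPsub : f P ≤ f Finset.univ := hmono _ _ (Finset.subset_univ _)
    -- basic facts giving slice axioms
    have hslice : ∀ t : ℕ, t ≤ f {L} →
        (sliceF (m+1) f t ∅ = 0) ∧
        (∀ I J, I ⊆ J → sliceF (m+1) f t I ≤ sliceF (m+1) f t J) ∧
        (∀ I J, sliceF (m+1) f t (I ∪ J) + sliceF (m+1) f t (I ∩ J)
          ≤ sliceF (m+1) f t I + sliceF (m+1) f t J) :=
      fun t ht => ⟨sliceF_empty hf0, fun I J h => sliceF_mono hmono I J h,
        fun I J => sliceF_submod hmono hsub ht I J⟩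
    -- the top slice value t₀
    have ht0le : f Finset.univ - f P ≤ f {L} := by
      have h1 := hsub P {L}
      have h2 : P ∪ {L} = Finset.univ := by
        rw [Finset.union_comm, ← Finset.insert_eq, hP, insert_last_liftF_univ]
      have h3 : P ∩ {L} = ∅ := by
        rw [Finset.inter_singleton_of_notMem (last_not_mem_liftF _)]
      rw [h2, h3, hf0] at h1
      omega
    -- existence of a top-activity basis
    have htop : ∃ a ∈ PB (m+2) f, iota f a = m+2 := by
      set t₀ : ℕ := f Finset.univ - f P with ht₀
      have ht₀c : (t₀ : ℤ) = (f Finset.univ : ℤ) - f P := by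
        rw [ht₀, Nat.cast_sub hPsub]
      obtain ⟨hse, hsm, hss⟩ := hslice t₀ ht0le
      obtain ⟨⟨a', ha', hia'⟩, -⟩ := IH (sliceF (m+1) f t₀) hse hsm hss
      have htmin : (f Finset.univ : ℤ) - (f P : ℤ) ≤ (t₀ : ℤ) := le_of_eq ht₀c.symm
      have hmem : Fin.snoc a' (t₀ : ℤ) ∈ PB (m+2) f := snoc_memPB hmono ha' ht0le htmin
      refine ⟨_, hmem, ?_⟩
      have hat : (Fin.snoc a' (t₀ : ℤ) : Fin (m+2) → ℤ) L = (t₀ : ℤ) := Fin.snoc_last _ _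
      rw [iota_decomp hmono hmem hat ht0le htmin]
      have hrest : (fun k => (Fin.snoc a' (t₀ : ℤ) : Fin (m+2) → ℤ) (Fin.castSucc k)) = a' := by
        funext k; exact Fin.snoc_castSucc _ _ _
      rw [hrest, hia']
      -- last index is active since the prefix is tight
      have hact : IntAct f (Fin.snoc a' (t₀:ℤ)) L := by
        rw [intAct_last hf0 hsub hmem]
        right
        -- prefix sum = total - t₀ = f P
        obtain ⟨-, -, htot'⟩ := memPB.mp hmem
        have := Fin.sum_univ_castSucc (Fin.snoc a' (t₀:ℤ) : Fin (m+2) → ℤ)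
        rw [htot', hat] at this
        rw [sum_liftF]
        have hsum : ∑ i : Fin (m+1), (Fin.snoc a' (t₀:ℤ) : Fin (m+2) → ℤ) (Fin.castSucc i)
            = (f Finset.univ : ℤ) - t₀ := by linarith
        rw [hsum, ht₀c]; ring
      rw [if_pos hact]
    refine ⟨htop, ?_⟩
    intro a ha l hl1 hl2
    obtain ⟨hpos, hcon, htot⟩ := memPB.mp ha
    set t : ℕ := (a L).toNat with htdef
    have hat : a L = (t : ℤ) := (Int.toNat_of_nonneg (hpos L)).symm
    have ht : t ≤ f {L} := by
      have := hcon {L}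
      rw [Finset.sum_singleton, hat] at this
      exact_mod_cast this
    have hpresum : ∑ j ∈ P, a j = (f Finset.univ : ℤ) - t := by
      have h1 := Fin.sum_univ_castSucc a
      rw [htot, hat] at h1
      rw [hP, sum_liftF]
      linarith
    have htmin : (f Finset.univ : ℤ) - (f P : ℤ) ≤ (t : ℤ) := by
      have := hcon P
      rw [hpresum] at this
      linarith
    have ha' : (fun k => a (Fin.castSucc k)) ∈ PB (m+1) (sliceF (m+1) f t) :=
      memPB_slice hmono ha hat
    obtain ⟨hse, hsm, hss⟩ := hslice t ht
    have snoc_pre : ∀ b' : Fin (m+1) → ℤ, b' ∈ PB (m+1) (sliceF (m+1) f t) →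
        ∑ j ∈ P, (Fin.snoc b' (t:ℤ) : Fin (m+2) → ℤ) j = (f Finset.univ : ℤ) - t := by
      intro b' hb'
      rw [hP, sum_liftF]
      have hrest2 : ∀ k : Fin (m+1),
          (Fin.snoc b' (t:ℤ) : Fin (m+2) → ℤ) (Fin.castSucc k) = b' k :=
        fun k => Fin.snoc_castSucc _ _ _
      rw [Finset.sum_congr rfl fun k _ => hrest2 k]
      obtain ⟨-, -, htb⟩ := memPB.mp hb'
      rw [htb, sliceF_cast hmono ht, insert_last_liftF_univ, min_eq_right]
      rw [← hP]
      linarith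
    have hdec := iota_decomp hmono ha hat ht htmin
    -- the activity condition for the last index depends only on t
    have hcond : IntAct f a L ↔ ((t:ℤ) = 0 ∨ (f Finset.univ : ℤ) - t = (f P : ℤ)) := by
      rw [intAct_last hf0 hsub ha, hat, ← hP, hpresum]
    by_cases hc : (t:ℤ) = 0 ∨ (f Finset.univ : ℤ) - t = (f P : ℤ)
    · -- e = 1
      rw [if_pos (hcond.mpr hc)] at hdec
      have hl1' : iota (sliceF (m+1) f t) (fun k => a (Fin.castSucc k)) ≤ l - 1 := by omega
      have hlm : l - 1 ≤ m + 1 := by omega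
      have hlpos : 1 ≤ l := by omega
      obtain ⟨-, hint⟩ := IH (sliceF (m+1) f t) hse hsm hss
      obtain ⟨b', hb', hib'⟩ := hint _ ha' (l-1) hl1' hlm
      have hmem : Fin.snoc b' (t : ℤ) ∈ PB (m+2) f := snoc_memPB hmono hb' ht htmin
      refine ⟨_, hmem, ?_⟩
      have hbt : (Fin.snoc b' (t : ℤ) : Fin (m+2) → ℤ) L = (t : ℤ) := Fin.snoc_last _ _
      rw [iota_decomp hmono hmem hbt ht htmin]
      have hrest : (fun k => (Fin.snoc b' (t : ℤ) : Fin (m+2) → ℤ) (Fin.castSucc k)) = b' := by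
        funext k; exact Fin.snoc_castSucc _ _ _
      rw [hrest, hib']
      -- condition for b is the same as for a
      have hbpre := snoc_pre b' hb'
      have hbcond : IntAct f (Fin.snoc b' (t:ℤ)) L := by
        rw [intAct_last hf0 hsub hmem, hbt, ← hP, hbpre]
        exact hc
      rw [if_pos hbcond]
      omega
    · -- e = 0
      rw [if_neg (fun hac => hc (hcond.mp hac))] at hdec
      rcases Nat.lt_or_ge l (m+2) with hlm | hlm
      · obtain ⟨-, hint⟩ := IH (sliceF (m+1) f t) hse hsm hss
        obtain ⟨b', hb', hib'⟩ := hint _ ha' l (by omega) (by omega)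
        have hmem : Fin.snoc b' (t : ℤ) ∈ PB (m+2) f := snoc_memPB hmono hb' ht htmin
        refine ⟨_, hmem, ?_⟩
        have hbt : (Fin.snoc b' (t : ℤ) : Fin (m+2) → ℤ) L = (t : ℤ) := Fin.snoc_last _ _
        rw [iota_decomp hmono hmem hbt ht htmin]
        have hrest : (fun k => (Fin.snoc b' (t : ℤ) : Fin (m+2) → ℤ) (Fin.castSucc k)) = b' := by
          funext k; exact Fin.snoc_castSucc _ _ _
        rw [hrest, hib']
        have hbpre := snoc_pre b' hb'
        have hbcond : ¬ IntAct f (Fin.snoc b' (t:ℤ)) L := by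
          rw [intAct_last hf0 hsub hmem, hbt, ← hP, hbpre]
          exact hc
        rw [if_neg hbcond]
        omega
      · have : l = m + 2 := by omega
        rw [this]
        exact htop

end SliceSection
section DualSection
variable {n : ℕ}
/-- the dual polymatroid rank function -/
def dualF (n : ℕ) (f : Finset (Fin n) → ℕ) : Finset (Fin n) → ℕ :=
  fun I => I.card * f Finset.univ + f Iᶜ - f Finset.univ

section Dual
variable {f : Finset (Fin n) → ℕ}

lemma dualF_le (I : Finset (Fin n)) : f Finset.univ ≤ I.card * f Finset.univ + f Iᶜ := by
  rcases Finset.eq_empty_or_nonempty I with rfl | hne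
  · simp
  · have h1 : 1 ≤ I.card := Finset.card_pos.mpr hne
    calc f Finset.univ = 1 * f Finset.univ := (one_mul _).symm
    _ ≤ I.card * f Finset.univ := Nat.mul_le_mul_right _ h1
    _ ≤ _ := Nat.le_add_right _ _

lemma dualF_cast (I : Finset (Fin n)) :
    (dualF n f I : ℤ) = I.card * f Finset.univ + f Iᶜ - f Finset.univ := by
  rw [dualF, Nat.cast_sub (dualF_le I)]
  push_cast
  ring

lemma dualF_empty : dualF n f ∅ = 0 := by
  simp [dualF]

lemma dualF_mono (hmono : ∀ I J : Finset (Fin n), I ⊆ J → f I ≤ f J)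
    (I J : Finset (Fin n)) (hIJ : I ⊆ J) : dualF n f I ≤ dualF n f J := by
  rcases eq_or_lt_of_le (Finset.card_le_card hIJ) with heq | hlt
  · have : I = J := Finset.eq_of_subset_of_card_le hIJ (le_of_eq heq.symm)
    rw [this]
  · have h1 : I.card + 1 ≤ J.card := hlt
    have h2 : f Iᶜ ≤ f Finset.univ := hmono _ _ (Finset.subset_univ _)
    have key : I.card * f Finset.univ + f Iᶜ ≤ J.card * f Finset.univ + f Jᶜ := by
      calc I.card * f Finset.univ + f Iᶜ ≤ I.card * f Finset.univ + f Finset.univ := by omega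
      _ = (I.card + 1) * f Finset.univ := by ring
      _ ≤ J.card * f Finset.univ := Nat.mul_le_mul_right _ h1
      _ ≤ _ := Nat.le_add_right _ _
    exact Nat.sub_le_sub_right key _

lemma dualF_submod (hsub : ∀ I J : Finset (Fin n), f (I ∪ J) + f (I ∩ J) ≤ f I + f J)
    (I J : Finset (Fin n)) :
    dualF n f (I ∪ J) + dualF n f (I ∩ J) ≤ dualF n f I + dualF n f J := by
  have key : (dualF n f (I ∪ J) : ℤ) + dualF n f (I ∩ J) ≤ (dualF n f I : ℤ) + dualF n f J := by
    rw [dualF_cast, dualF_cast, dualF_cast, dualF_cast, Finset.compl_union, Finset.compl_inter]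
    have h1 : ((I ∪ J).card : ℤ) + (I ∩ J).card = I.card + J.card := by
      exact_mod_cast Finset.card_union_add_card_inter I J
    have h2 : (((I ∪ J).card : ℤ) + (I ∩ J).card) * (f Finset.univ : ℤ)
        = ((I.card : ℤ) + J.card) * f Finset.univ := by rw [h1]
    have h3 : (f (Iᶜ ∪ Jᶜ) : ℤ) + f (Iᶜ ∩ Jᶜ) ≤ (f Iᶜ : ℤ) + f Jᶜ := by
      exact_mod_cast hsub Iᶜ Jᶜ
    ring_nf at h2 ⊢
    linarith
  exact_mod_cast key

/-- PB duality: `a ↦ f(univ) - a` maps bases to dual bases -/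
lemma memPB_dual (hf0 : f ∅ = 0) (hmono : ∀ I J : Finset (Fin n), I ⊆ J → f I ≤ f J) (b : Fin n → ℤ) :
    b ∈ PB n f ↔ (fun i => (f Finset.univ : ℤ) - b i) ∈ PB n (dualF n f) := by
  classical
  have hsumc : ∀ (c : Fin n → ℤ) (I : Finset (Fin n)),
      ∑ j ∈ I, ((f Finset.univ : ℤ) - c j) = I.card * (f Finset.univ : ℤ) - ∑ j ∈ I, c j := by
    intro c I
    rw [Finset.sum_sub_distrib, Finset.sum_const, nsmul_eq_mul]
  have hcardc : ∀ I : Finset (Fin n), ((Iᶜ : Finset (Fin n)).card : ℤ) = (n : ℤ) - I.card := by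
    intro I
    rw [Finset.card_compl, Nat.cast_sub (by simpa using Finset.card_le_univ I)]
    simp
  have hdu : (dualF n f Finset.univ : ℤ) = (n : ℤ) * f Finset.univ - f Finset.univ := by
    rw [dualF_cast, Finset.compl_univ, hf0]
    simp
  constructor
  · intro hb
    obtain ⟨hpos, hcon, htot⟩ := memPB.mp hb
    refine memPB.mpr ⟨?_, ?_, ?_⟩
    · intro i
      have h1 : b i ≤ (f {i} : ℤ) := by simpa using hcon {i}
      have h2 : (f {i} : ℤ) ≤ f Finset.univ := by
        exact_mod_cast hmono {i} Finset.univ (Finset.subset_univ _)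
      omega
    · intro I
      rw [hsumc, dualF_cast]
      have h1 := hcon Iᶜ
      have h2 : ∑ j ∈ I, b j + ∑ j ∈ Iᶜ, b j = (f Finset.univ : ℤ) := by
        rw [Finset.sum_add_sum_compl, htot]
      linarith
    · show ∑ j, ((f Finset.univ : ℤ) - b j) = _
      have h1 := hsumc b Finset.univ
      have h2 : ((Finset.univ : Finset (Fin n)).card : ℤ) = n := by simp
      rw [h1, h2, htot, hdu]
  · intro hc
    obtain ⟨hpos, hcon, htot⟩ := memPB.mp hc
    -- recover total of b
    have htotb : ∑ j, b j = (f Finset.univ : ℤ) := by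
      have h1 : ∑ j, ((f Finset.univ : ℤ) - b j)
          = (Finset.univ : Finset (Fin n)).card * (f Finset.univ : ℤ) - ∑ j, b j :=
        hsumc b Finset.univ
      rw [htot, hdu] at h1
      have : ((Finset.univ : Finset (Fin n)).card : ℤ) = n := by simp
      rw [this] at h1
      linarith
    refine memPB.mpr ⟨?_, ?_, htotb⟩
    · intro i
      have h1 : (f Finset.univ : ℤ) - b i ≤ dualF n f {i} := by simpa using hcon {i}
      have h2 : (dualF n f {i} : ℤ) = f ({i}ᶜ) := by
        rw [dualF_cast]
        simp
      have h3 : (f ({i}ᶜ) : ℤ) ≤ f Finset.univ := by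
        exact_mod_cast hmono _ Finset.univ (Finset.subset_univ _)
      omega
    · intro I
      have h1 := hcon Iᶜ
      rw [hsumc, dualF_cast, compl_compl, hcardc] at h1
      have h2 : ∑ j ∈ I, b j + ∑ j ∈ Iᶜ, b j = (f Finset.univ : ℤ) := by
        rw [Finset.sum_add_sum_compl, htotb]
      linarith

lemma extAct_dual (a : Fin n → ℤ) (hf0 : f ∅ = 0)
    (hmono : ∀ I J : Finset (Fin n), I ⊆ J → f I ≤ f J)
    (i : Fin n) :
    ExtAct f a i ↔ IntAct (dualF n f) (fun k => (f Finset.univ : ℤ) - a k) i := by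
  unfold ExtAct IntAct
  apply forall_congr'
  intro j
  apply imp_congr_right
  intro hj
  rw [not_iff_not]
  have hfn : ((fun k => (f Finset.univ : ℤ) - a k) - Pi.single i 1 + Pi.single j 1 : Fin n → ℤ)
      = fun k => (f Finset.univ : ℤ) - (a + Pi.single i 1 - Pi.single j 1 : Fin n → ℤ) k := by
    funext k
    simp only [Pi.add_apply, Pi.sub_apply, Pi.single_apply]
    ring
  rw [hfn]
  exact memPB_dual hf0 hmono _

open scoped Classical in
lemma eps_eq_iota_dual (a : Fin n → ℤ) (hf0 : f ∅ = 0)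
    (hmono : ∀ I J : Finset (Fin n), I ⊆ J → f I ≤ f J) :
    eps f a = iota (dualF n f) (fun k => (f Finset.univ : ℤ) - a k) := by
  unfold eps iota ExtSet IntSet
  congr 1
  apply Finset.filter_congr
  intro i _
  exact extAct_dual a hf0 hmono i

end Dual

end DualSection

open scoped Classical in
lemma coeff_ne_iff {α : Type*} (s : Finset α) (d : α → ℕ) (k : ℕ) :
    (∑ a ∈ s, (Polynomial.X : Polynomial ℤ) ^ d a).coeff k ≠ 0 ↔ ∃ a ∈ s, d a = k := by
  rw [Polynomial.finset_sum_coeff,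
    Finset.sum_congr rfl fun a _ => Polynomial.coeff_X_pow (d a) k,
    Finset.sum_boole, Int.natCast_ne_zero, Finset.card_ne_zero, Finset.filter_nonempty_iff]
  constructor
  · rintro ⟨a, ha, h⟩; exact ⟨a, ha, h.symm⟩
  · rintro ⟨a, ha, h⟩; exact ⟨a, ha, h.symm⟩


/-- `J_P(x,1) = Σ_a x^(ι(a))` and `J_P(1,y) = Σ_a y^(ε(a))` are interpolating. -/
theorem J_x_one_and_one_y_interpolating
    (n : ℕ) (hn : 0 < n) (f : Finset (Fin n) → ℕ)
    (hf0 : f ∅ = 0)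
    (hmono : ∀ I J : Finset (Fin n), I ⊆ J → f I ≤ f J)
    (hsub : ∀ I J : Finset (Fin n), f (I ∪ J) + f (I ∩ J) ≤ f I + f J) :
    Interpolating (∑ a ∈ PB n f, (Polynomial.X : Polynomial ℤ) ^ iota f a) ∧
    Interpolating (∑ a ∈ PB n f, (Polynomial.X : Polynomial ℤ) ^ eps f a) := by
  classical
  obtain ⟨m, rfl⟩ : ∃ m, n = m + 1 := ⟨n - 1, by omega⟩
  constructor
  · intro k l m' hkl hlm' hk hm'
    rw [coeff_ne_iff] at hk hm' ⊢
    obtain ⟨a, ha, hak⟩ := hk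
    obtain ⟨c, hc, hcm⟩ := hm'
    have hm'le : m' ≤ m + 1 := hcm ▸ iota_le c
    exact (iota_interval m f hf0 hmono hsub).2 a ha l (by omega) (by omega)
  · have hrw : (∑ a ∈ PB (m+1) f, (Polynomial.X : Polynomial ℤ) ^ eps f a)
        = ∑ c ∈ PB (m+1) (dualF (m+1) f),
            (Polynomial.X : Polynomial ℤ) ^ iota (dualF (m+1) f) c := by
      apply Finset.sum_nbij' (fun a => fun i => (f Finset.univ : ℤ) - a i)
        (fun c => fun i => (f Finset.univ : ℤ) - c i)
      · intro a ha
        exact (memPB_dual hf0 hmono a).mp ha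
      · intro c hc
        apply (memPB_dual hf0 hmono _).mpr
        simpa using hc
      · intro a _; funext i; simp
      · intro c _; funext i; simp
      · intro a _
        rw [eps_eq_iota_dual a hf0 hmono]
    rw [hrw]
    intro k l m' hkl hlm' hk hm'
    rw [coeff_ne_iff] at hk hm' ⊢
    obtain ⟨a, ha, hak⟩ := hk
    obtain ⟨c, hc, hcm⟩ := hm'
    have hm'le : m' ≤ m + 1 := hcm ▸ iota_le c
    exact (iota_interval m (dualF (m+1) f) dualF_empty (dualF_mono hmono)
      (dualF_submod hsub)).2 a ha l (by omega) (by omega)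
end
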